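/- For every integer n ≥ 109, ∏_{k=109}^{n} (k/8.5 + 2)^{1/(k−1)} ≤ (119.5/107.5)^{9/8} · exp(9/215) · (8.5/107.5)^{(1/2)·ln(107.5/8.5)} · ((n − 0.5)/8.5)^{(1/2)·ln((n − 0.5)/8.5)}. -/

import Mathlib

open Real

set_option maxHeartbeats 1000000


lemma pade_log (v : ℝ) (hv : 0 ≤ v) : Real.log (1 + v) ≤ v * (6 + v) / (6 + 4 * v) := by
  have key : ∀ x : ℝ, 0 ≤ x → HasDerivAt
      (fun t : ℝ => t * (6 + t) / (6 + 4 * t) - Real.log (1 + t))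
      ((36 + 12 * x + 4 * x ^ 2) / (6 + 4 * x) ^ 2 - 1 / (1 + x)) x := by
    intro x hx
    have h1 : (0:ℝ) < 6 + 4 * x := by linarith
    have h2 : (0:ℝ) < 1 + x := by linarith
    have d1 : HasDerivAt (fun t : ℝ => t * (6 + t)) (6 + 2 * x) x := by
      have := (hasDerivAt_id x).mul ((hasDerivAt_const x (6:ℝ)).add (hasDerivAt_id x))
      exact this.congr_deriv (by simp; ring)
    have d2 : HasDerivAt (fun t : ℝ => 6 + 4 * t) 4 x := by
      have := ((hasDerivAt_id x).const_mul (4:ℝ)).const_add (6:ℝ)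
      simpa using this
    have d3 : HasDerivAt (fun t : ℝ => t * (6 + t) / (6 + 4 * t))
        (((6 + 2 * x) * (6 + 4 * x) - x * (6 + x) * 4) / (6 + 4 * x) ^ 2) x :=
      d1.div d2 h1.ne'
    have d4 : HasDerivAt (fun t : ℝ => Real.log (1 + t)) (1 / (1 + x)) x := by
      have := ((hasDerivAt_const x (1:ℝ)).add (hasDerivAt_id x)).log h2.ne'
      convert this using 1 <;> simp
    have := d3.sub d4
    exact this.congr_deriv (by ring)
  have mono : MonotoneOn (fun t : ℝ => t * (6 + t) / (6 + 4 * t) - Real.log (1 + t))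
      (Set.Ici (0:ℝ)) := by
    apply monotoneOn_of_deriv_nonneg (convex_Ici 0)
    · intro x hx
      exact (key x hx).continuousAt.continuousWithinAt
    · intro x hx
      rw [interior_Ici] at hx
      exact (key x hx.le).differentiableAt.differentiableWithinAt
    · intro x hx
      rw [interior_Ici, Set.mem_Ioi] at hx
      rw [(key x hx.le).deriv]
      have h1 : (0:ℝ) < 6 + 4 * x := by linarith [hx.le]
      have h2 : (0:ℝ) < 1 + x := by linarith [hx.le]
      rw [sub_nonneg, div_le_div_iff₀ h2 (by positivity)]
      nlinarith [mul_nonneg (mul_nonneg hx.le hx.le) hx.le]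
  have h0 := mono Set.self_mem_Ici (Set.mem_Ici.mpr hv) hv
  simp only [zero_mul, mul_zero, zero_div, add_zero, Real.log_one, sub_zero, zero_sub] at h0
  have : (0:ℝ) * (6 + 0) / (6 + 4 * 0) - Real.log (1 + 0) = 0 := by norm_num
  linarith [h0, this.symm.le]

lemma artanh_low (h : ℝ) (h0 : 0 ≤ h) (h1 : h < 1) :
    2 * h + 2 / 3 * h ^ 3 ≤ Real.log (1 + h) - Real.log (1 - h) := by
  have key : ∀ x : ℝ, 0 ≤ x → x < 1 → HasDerivAt
      (fun t : ℝ => Real.log (1 + t) - Real.log (1 - t) - 2 * t - 2 / 3 * t ^ 3)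
      (1 / (1 + x) + 1 / (1 - x) - 2 - 2 * x ^ 2) x := by
    intro x hx hx1
    have h2 : (0:ℝ) < 1 + x := by linarith
    have h3 : (0:ℝ) < 1 - x := by linarith
    have d1 : HasDerivAt (fun t : ℝ => Real.log (1 + t)) (1 / (1 + x)) x := by
      have := ((hasDerivAt_const x (1:ℝ)).add (hasDerivAt_id x)).log h2.ne'
      convert this using 1 <;> simp
    have d2 : HasDerivAt (fun t : ℝ => Real.log (1 - t)) (-(1 / (1 - x))) x := by
      have := ((hasDerivAt_const x (1:ℝ)).sub (hasDerivAt_id x)).log h3.ne'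
      convert this using 1 <;> simp [neg_div]
    have d3 : HasDerivAt (fun t : ℝ => 2 * t) 2 x := by
      simpa using (hasDerivAt_id x).const_mul (2:ℝ)
    have d4 : HasDerivAt (fun t : ℝ => 2 / 3 * t ^ 3) (2 / 3 * (3 * x ^ 2)) x := by
      exact (hasDerivAt_pow 3 x).const_mul (2/3 : ℝ) |>.congr_deriv (by ring)
    have := ((d1.sub d2).sub d3).sub d4
    exact this.congr_deriv (by ring)
  have mono : MonotoneOn
      (fun t : ℝ => Real.log (1 + t) - Real.log (1 - t) - 2 * t - 2 / 3 * t ^ 3)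
      (Set.Ico (0:ℝ) 1) := by
    apply monotoneOn_of_deriv_nonneg (convex_Ico 0 1)
    · intro x hx
      exact (key x hx.1 hx.2).continuousAt.continuousWithinAt
    · intro x hx
      rw [interior_Ico] at hx
      exact (key x hx.1.le hx.2).differentiableAt.differentiableWithinAt
    · intro x hx
      rw [interior_Ico] at hx
      rw [(key x hx.1.le hx.2).deriv]
      have h2 : (0:ℝ) < 1 + x := by linarith [hx.1.le]
      have h3 : (0:ℝ) < 1 - x := hx.2 |> sub_pos.mpr
      have e : 1 / (1 + x) + 1 / (1 - x) - 2 - 2 * x ^ 2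
          = 2 * x ^ 4 / ((1 + x) * (1 - x)) := by
        field_simp
        ring
      rw [e]
      positivity
  have h0 := mono (Set.mem_Ico.mpr ⟨le_refl 0, by norm_num⟩) (Set.mem_Ico.mpr ⟨h0, h1⟩) h0
  norm_num at h0
  linarith

lemma quad_log (w : ℝ) (hw : 0 ≤ w) : w - w ^ 2 / 2 ≤ Real.log (1 + w) := by
  have key : ∀ x : ℝ, 0 ≤ x → HasDerivAt
      (fun t : ℝ => Real.log (1 + t) - t + t ^ 2 / 2)
      (1 / (1 + x) - 1 + x) x := by
    intro x hx
    have h2 : (0:ℝ) < 1 + x := by linarith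
    have d1 : HasDerivAt (fun t : ℝ => Real.log (1 + t)) (1 / (1 + x)) x := by
      have := ((hasDerivAt_const x (1:ℝ)).add (hasDerivAt_id x)).log h2.ne'
      convert this using 1 <;> simp
    have d2 : HasDerivAt (fun t : ℝ => t ^ 2 / 2) (x) x := by
      have := (hasDerivAt_pow 2 x).div_const (2:ℝ)
      exact this.congr_deriv (by push_cast; ring)
    have := (d1.sub (hasDerivAt_id x)).add d2
    exact this
  have mono : MonotoneOn (fun t : ℝ => Real.log (1 + t) - t + t ^ 2 / 2)
      (Set.Ici (0:ℝ)) := by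
    apply monotoneOn_of_deriv_nonneg (convex_Ici 0)
    · intro x hx
      exact (key x hx).continuousAt.continuousWithinAt
    · intro x hx
      rw [interior_Ici] at hx
      exact (key x hx.le).differentiableAt.differentiableWithinAt
    · intro x hx
      rw [interior_Ici, Set.mem_Ioi] at hx
      rw [(key x hx.le).deriv]
      have h2 : (0:ℝ) < 1 + x := by linarith [hx.le]
      have e : 1 / (1 + x) - 1 + x = x ^ 2 / (1 + x) := by field_simp; ring
      rw [e]; positivity
  have h0 := mono Set.self_mem_Ici (Set.mem_Ici.mpr hw) hw
  norm_num at h0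
  linarith

lemma rat_ineq (u : ℝ) (hu : 108 ≤ u) :
    18 * (u + 3) / (u * (u + 12)) * (1 / u)
      + 1 / 2 * (1 / (4 * u ^ 2 - 1) * (1 / (u - 0.5)))
      + 81 / (u ^ 2 + 12 * u - 6.25) ^ 2
    ≤ 1 / (6 * u ^ 3) + 13.5 / (u ^ 2 + 12 * u - 6.25)
      + 4.5 * (1 / (u - 0.5) - 1 / (u + 0.5)) := by
  have hu0 : (0:ℝ) < u := by linarith
  have hum : (0:ℝ) < u - 0.5 := by linarith
  have hup : (0:ℝ) < u + 0.5 := by linarith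
  have h12 : (0:ℝ) < u + 12 := by linarith
  have hD : (0:ℝ) < u ^ 2 + 12 * u - 6.25 := by nlinarith
  have h4u : (0:ℝ) < 4 * u ^ 2 - 1 := by nlinarith
  have hsq : (0:ℝ) < u ^ 2 - 0.25 := by nlinarith
  have s1 : 18 * (u + 3) / (u * (u + 12)) * (1 / u)
      = 13.5 / (u * (u + 12)) + 4.5 / u ^ 2 := by
    field_simp [hu0.ne', h12.ne']
    ring
  have s2 : 4.5 / u ^ 2 ≤ 4.5 * (1 / (u - 0.5) - 1 / (u + 0.5)) := by
    have e : 4.5 * (1 / (u - 0.5) - 1 / (u + 0.5)) = 4.5 / (u ^ 2 - 0.25) := by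
      field_simp [hum.ne', hup.ne', hsq.ne']
      ring
    rw [e, div_le_div_iff₀ (by positivity) hsq]
    nlinarith
  have s3 : 13.5 / (u * (u + 12)) + 81 / (u ^ 2 + 12 * u - 6.25) ^ 2
      ≤ 13.5 / (u ^ 2 + 12 * u - 6.25) := by
    have k1 : (0:ℝ) ≤ 3.375 * u ^ 2 + 40.5 * u - 527.34375 := by nlinarith
    have key : 81 / (u ^ 2 + 12 * u - 6.25) ^ 2
        ≤ 84.375 / ((u ^ 2 + 12 * u - 6.25) * (u * (u + 12))) := by
      rw [div_le_div_iff₀ (by positivity) (by positivity)]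
      nlinarith [mul_nonneg hD.le k1]
    have e : 13.5 / (u ^ 2 + 12 * u - 6.25) - 13.5 / (u * (u + 12))
        = 84.375 / ((u ^ 2 + 12 * u - 6.25) * (u * (u + 12))) := by
      rw [div_sub_div _ _ hD.ne' (mul_pos hu0 h12).ne']
      congr 1
      ring
    linarith
  have s4 : 1 / 2 * (1 / (4 * u ^ 2 - 1) * (1 / (u - 0.5))) ≤ 1 / (6 * u ^ 3) := by
    have e : 1 / 2 * (1 / (4 * u ^ 2 - 1) * (1 / (u - 0.5)))
        = 1 / (2 * (4 * u ^ 2 - 1) * (u - 0.5)) := by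
      field_simp [h4u.ne', hum.ne']
      try ring
    rw [e, div_le_div_iff₀ (by positivity) (by positivity)]
    nlinarith
  linarith

/-- canonical-atom version -/
lemma rat_ineq' (u : ℝ) (hu : 108 ≤ u) :
    18 * (u + 3) * (1 / u * (1 / u) * (1 / (u + 12)))
      + 1 / 2 * (1 / (4 * u ^ 2 - 1) * (1 / (u - 0.5)))
      + 81 * (1 / (u ^ 2 + 12 * u - 6.25)) ^ 2
    ≤ 1 / 6 * (1 / u) ^ 3 + 13.5 * (1 / (u ^ 2 + 12 * u - 6.25))
      + 4.5 * (1 / (u - 0.5) - 1 / (u + 0.5)) := by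
  have hu0 : (0:ℝ) < u := by linarith
  have hum : (0:ℝ) < u - 0.5 := by linarith
  have hup : (0:ℝ) < u + 0.5 := by linarith
  have h12 : (0:ℝ) < u + 12 := by linarith
  have hD : (0:ℝ) < u ^ 2 + 12 * u - 6.25 := by nlinarith
  have h4u : (0:ℝ) < 4 * u ^ 2 - 1 := by nlinarith
  calc 18 * (u + 3) * (1 / u * (1 / u) * (1 / (u + 12)))
      + 1 / 2 * (1 / (4 * u ^ 2 - 1) * (1 / (u - 0.5)))
      + 81 * (1 / (u ^ 2 + 12 * u - 6.25)) ^ 2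
      = 18 * (u + 3) / (u * (u + 12)) * (1 / u)
        + 1 / 2 * (1 / (4 * u ^ 2 - 1) * (1 / (u - 0.5)))
        + 81 / (u ^ 2 + 12 * u - 6.25) ^ 2 := by
        field_simp [hu0.ne', hum.ne', hup.ne', h12.ne', hD.ne', h4u.ne']
    _ ≤ 1 / (6 * u ^ 3) + 13.5 / (u ^ 2 + 12 * u - 6.25)
        + 4.5 * (1 / (u - 0.5) - 1 / (u + 0.5)) := rat_ineq u hu
    _ = 1 / 6 * (1 / u) ^ 3 + 13.5 * (1 / (u ^ 2 + 12 * u - 6.25))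
        + 4.5 * (1 / (u - 0.5) - 1 / (u + 0.5)) := by
        field_simp [hu0.ne', hum.ne', hup.ne', h12.ne', hD.ne', h4u.ne']
        try ring

lemma key_ineq (u : ℝ) (hu : 108 ≤ u) :
    1 / u * Real.log ((u + 18) / 8.5) ≤
      1 / 2 * (Real.log ((u + 0.5) / 8.5) ^ 2 - Real.log ((u - 0.5) / 8.5) ^ 2)
      + 9 / 8 * (Real.log ((u + 11.5) / (u - 0.5)) - Real.log ((u + 12.5) / (u + 0.5)))
      + 4.5 * (1 / (u - 0.5) - 1 / (u + 0.5)) := by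
  have hu0 : (0:ℝ) < u := by linarith
  have hum : (0:ℝ) < u - 0.5 := by linarith
  have hup : (0:ℝ) < u + 0.5 := by linarith
  have hD0 : (0:ℝ) < u ^ 2 + 12 * u - 6.25 := by nlinarith
  have h4u : (0:ℝ) < 4 * u ^ 2 - 1 := by nlinarith
  have hsq : (0:ℝ) < u ^ 2 - 0.25 := by nlinarith
  obtain ⟨D, hDdef⟩ : ∃ D : ℝ, D = u ^ 2 + 12 * u - 6.25 := ⟨_, rfl⟩
  obtain ⟨A, hA⟩ : ∃ A : ℝ, A = Real.log (u / 8.5) := ⟨_, rfl⟩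
  obtain ⟨P, hP⟩ : ∃ P : ℝ, P = Real.log ((u + 0.5) / u) := ⟨_, rfl⟩
  obtain ⟨Q, hQ⟩ : ∃ Q : ℝ, Q = Real.log ((u - 0.5) / u) := ⟨_, rfl⟩
  obtain ⟨V, hV⟩ : ∃ V : ℝ, V = Real.log ((u + 18) / u) := ⟨_, rfl⟩
  obtain ⟨W, hW⟩ : ∃ W : ℝ, W = Real.log (1 + 12 / D) := ⟨_, rfl⟩
  have hD : (0:ℝ) < D := by rw [hDdef]; exact hD0
  -- decompositions
  have eV : Real.log ((u + 18) / 8.5) = A + V := by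
    rw [hA, hV, ← Real.log_mul (by positivity) (by positivity)]
    congr 1
    field_simp [hu0.ne']
    try ring
  have ea : Real.log ((u + 0.5) / 8.5) = A + P := by
    rw [hA, hP, ← Real.log_mul (by positivity) (by positivity)]
    congr 1
    field_simp [hu0.ne']
    try ring
  have eb : Real.log ((u - 0.5) / 8.5) = A + Q := by
    rw [hA, hQ, ← Real.log_mul (by positivity) ((div_pos hum hu0).ne')]
    congr 1
    field_simp [hu0.ne']
    try ring
  have eE : Real.log ((u + 11.5) / (u - 0.5)) - Real.log ((u + 12.5) / (u + 0.5)) = W := by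
    rw [hW]
    have e1 : (u + 11.5) / (u - 0.5) = ((u + 12.5) / (u + 0.5)) * (1 + 12 / D) := by
      field_simp [hum.ne', hup.ne', hD.ne']
      rw [hDdef]; ring
    rw [e1, Real.log_mul (by positivity) (by positivity)]
    ring
  -- bounds
  have hVb : V ≤ 18 * (u + 3) * (1 / u * (1 / (u + 12))) := by
    have e : (u + 18) / u = 1 + 18 / u := by field_simp
    have h := pade_log (18 / u) (by positivity)
    rw [hV, e]
    have h6 : (0:ℝ) < 6 + 4 * (18 / u) := by positivity
    have e2 : 18 / u * (6 + 18 / u) / (6 + 4 * (18 / u))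
        = 18 * (u + 3) * (1 / u * (1 / (u + 12))) := by
      rw [div_eq_iff h6.ne']
      field_simp [hu0.ne']
      ring
    linarith [e2.le, e2.ge]
  have hPQlow : 1 / u + 1 / 12 * (1 / u) ^ 3 ≤ P - Q := by
    have e1 : (u + 0.5) / u = 1 + 1 / (2 * u) := by field_simp [hu0.ne']; try ring
    have e2 : (u - 0.5) / u = 1 - 1 / (2 * u) := by field_simp [hu0.ne']; try ring
    have h01 : (0:ℝ) ≤ 1 / (2 * u) := by positivity
    have h11 : 1 / (2 * u) < 1 := by rw [div_lt_one (by positivity)]; linarith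
    have h := artanh_low (1 / (2 * u)) h01 h11
    have e3 : 2 * (1 / (2 * u)) + 2 / 3 * (1 / (2 * u)) ^ 3
        = 1 / u + 1 / 12 * (1 / u) ^ 3 := by ring
    rw [hP, hQ, e1, e2]
    linarith
  have hPup : P ≤ 0.5 * (1 / u) := by
    have h := Real.log_le_sub_one_of_pos (div_pos hup hu0)
    rw [← hP] at h
    have e : (u + 0.5) / u - 1 = 0.5 * (1 / u) := by
      field_simp [hu0.ne']
      try ring
    linarith
  have hQlow : -(0.5 * (1 / (u - 0.5))) ≤ Q := by
    have h := Real.one_sub_inv_le_log_of_pos (div_pos hum hu0)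
    rw [← hQ] at h
    have e : 1 - ((u - 0.5) / u)⁻¹ = -(0.5 * (1 / (u - 0.5))) := by
      rw [inv_div]
      field_simp [hum.ne']
      try ring
    linarith
  have ePQ : P + Q = Real.log ((u ^ 2 - 0.25) / u ^ 2) := by
    rw [hP, hQ, ← Real.log_mul ((div_pos hup hu0).ne') ((div_pos hum hu0).ne')]
    congr 1
    field_simp [hu0.ne']
    ring
  have hSup : P + Q ≤ 0 := by
    rw [ePQ]
    apply Real.log_nonpos (by positivity)
    rw [div_le_one (by positivity)]
    nlinarith
  have hSlow : -(1 / (4 * u ^ 2 - 1)) ≤ P + Q := by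
    rw [ePQ]
    have h := Real.one_sub_inv_le_log_of_pos (div_pos hsq (by positivity : (0:ℝ) < u ^ 2))
    have e : 1 - ((u ^ 2 - 0.25) / u ^ 2)⁻¹ = -(1 / (4 * u ^ 2 - 1)) := by
      rw [inv_div]
      rw [one_sub_div hsq.ne', eq_neg_iff_add_eq_zero, div_add_div _ _ hsq.ne' h4u.ne',
        div_eq_zero_iff]
      left; ring
    linarith
  have hWlow : 12 * (1 / D) - 72 * (1 / D) ^ 2 ≤ W := by
    have h := quad_log (12 / D) (by positivity)
    rw [← hW] at h
    have e : 12 / D - (12 / D) ^ 2 / 2 = 12 * (1 / D) - 72 * (1 / D) ^ 2 := by ring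
    linarith
  have hA2 : 2 ≤ A := by
    rw [hA, Real.le_log_iff_exp_le (by positivity)]
    have h1 : Real.exp 2 = Real.exp 1 * Real.exp 1 := by
      rw [← Real.exp_add]; norm_num
    have h2 := Real.exp_one_lt_d9
    have h3 := Real.exp_pos 1
    have h4 : Real.exp 1 * Real.exp 1 < 7.39 := by nlinarith
    rw [h1, le_div_iff₀ (by norm_num : (0:ℝ) < 8.5)]
    linarith
  have hA0 : (0:ℝ) ≤ A := by linarith
  -- assembly
  rw [eV, ea, eb, eE]
  have expand : 1 / 2 * ((A + P) ^ 2 - (A + Q) ^ 2)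
      = A * (P - Q) + 1 / 2 * ((P + Q) * (P - Q)) := by ring
  rw [expand]
  have lhs_e : 1 / u * (A + V) = A * (1 / u) + V * (1 / u) := by ring
  rw [lhs_e]
  have key1 : V * (1 / u) ≤ 18 * (u + 3) * (1 / u * (1 / (u + 12))) * (1 / u) :=
    mul_le_mul_of_nonneg_right hVb (by positivity)
  have key2 : A * (1 / u) + 1 / 6 * (1 / u) ^ 3 ≤ A * (P - Q) := by
    have h1 := mul_le_mul_of_nonneg_left hPQlow hA0
    have h2 := mul_le_mul_of_nonneg_right hA2
      (show (0:ℝ) ≤ 1 / 12 * (1 / u) ^ 3 by positivity)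
    nlinarith [h1, h2]
  have hyup : P - Q ≤ 1 / (u - 0.5) := by
    have h : 0.5 * (1 / u) + 0.5 * (1 / (u - 0.5)) ≤ 1 / (u - 0.5) := by
      have hh : 1 / u ≤ 1 / (u - 0.5) := by
        apply one_div_le_one_div_of_le hum
        linarith
      linarith
    linarith
  have key3 : -(1 / (4 * u ^ 2 - 1) * (1 / (u - 0.5))) ≤ (P + Q) * (P - Q) := by
    have c1 : (P + Q) * (1 / (u - 0.5)) ≤ (P + Q) * (P - Q) := by
      nlinarith [mul_nonneg (neg_nonneg.mpr hSup) (sub_nonneg.mpr hyup)]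
    have c2 := mul_le_mul_of_nonneg_right hSlow
      (show (0:ℝ) ≤ 1 / (u - 0.5) by positivity)
    nlinarith [c1, c2]
  have hrat := rat_ineq' u hu
  rw [← hDdef] at hrat
  linarith [key1, key2, key3, hWlow, hrat]

lemma sum_bound (n : ℕ) (hn : 109 ≤ n) :
    ∑ k ∈ Finset.Icc 109 n, Real.log ((k : ℝ) / 8.5 + 2) * (1 / ((k : ℝ) - 1)) ≤
      1 / 2 * (Real.log (((n : ℝ) - 0.5) / 8.5) ^ 2 - Real.log (107.5 / 8.5) ^ 2)
      + 9 / 8 * (Real.log (119.5 / 107.5) - Real.log (((n : ℝ) + 11.5) / ((n : ℝ) - 0.5)))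
      + 4.5 * (1 / 107.5 - 1 / ((n : ℝ) - 0.5)) := by
  induction n, hn using Nat.le_induction with
  | base =>
    rw [Finset.Icc_self, Finset.sum_singleton]
    have h := key_ineq 108 le_rfl
    norm_num at h ⊢
    linarith
  | succ n hn ih =>
    rw [Finset.sum_Icc_succ_top (by omega : 109 ≤ n + 1)]
    have hn' : (109 : ℝ) ≤ (n : ℝ) := by exact_mod_cast hn
    have h := key_ineq (n : ℝ) (by linarith)
    push_cast
    have e1 : ((n : ℝ) + 1) / 8.5 + 2 = ((n : ℝ) + 18) / 8.5 := by ring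
    have e2 : ((n : ℝ) + 1) - 1 = (n : ℝ) := by ring
    have e3 : ((n : ℝ) + 1) - 0.5 = (n : ℝ) + 0.5 := by ring
    have e4 : ((n : ℝ) + 1) + 11.5 = (n : ℝ) + 12.5 := by ring
    rw [e1, e2, e3, e4]
    linarith [ih, h]

theorem prod_bound_13 (n : ℕ) (hn : 109 ≤ n) :
    ∏ k ∈ Finset.Icc 109 n, ((k : ℝ) / 8.5 + 2) ^ (1 / ((k : ℝ) - 1)) ≤
      (119.5 / 107.5) ^ ((9 : ℝ) / 8) * Real.exp (9 / 215) *
        (8.5 / 107.5) ^ ((1 / 2) * Real.log (107.5 / 8.5)) *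
        (((n : ℝ) - 0.5) / 8.5) ^ ((1 / 2) * Real.log (((n : ℝ) - 0.5) / 8.5)) := by
  have hn' : (109 : ℝ) ≤ (n : ℝ) := by exact_mod_cast hn
  have hnm : (0:ℝ) < ((n : ℝ) - 0.5) / 8.5 := by
    apply div_pos <;> [linarith; norm_num]
  have hprod : ∏ k ∈ Finset.Icc 109 n, ((k : ℝ) / 8.5 + 2) ^ (1 / ((k : ℝ) - 1))
      = Real.exp (∑ k ∈ Finset.Icc 109 n,
          Real.log ((k : ℝ) / 8.5 + 2) * (1 / ((k : ℝ) - 1))) := by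
    rw [Real.exp_sum]
    exact Finset.prod_congr rfl fun k _ =>
      Real.rpow_def_of_pos (by positivity) _
  rw [hprod]
  have e1 : ((119.5 : ℝ) / 107.5) ^ ((9 : ℝ) / 8)
      = Real.exp (Real.log (119.5 / 107.5) * (9 / 8)) :=
    Real.rpow_def_of_pos (by norm_num) _
  have e2 : ((8.5 : ℝ) / 107.5) ^ ((1 / 2) * Real.log (107.5 / 8.5))
      = Real.exp (Real.log (8.5 / 107.5) * ((1 / 2) * Real.log (107.5 / 8.5))) :=
    Real.rpow_def_of_pos (by norm_num) _
  have e3 : (((n : ℝ) - 0.5) / 8.5) ^ ((1 / 2) * Real.log (((n : ℝ) - 0.5) / 8.5))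
      = Real.exp (Real.log (((n : ℝ) - 0.5) / 8.5)
          * ((1 / 2) * Real.log (((n : ℝ) - 0.5) / 8.5))) :=
    Real.rpow_def_of_pos hnm _
  rw [e1, e2, e3, ← Real.exp_add, ← Real.exp_add, ← Real.exp_add, Real.exp_le_exp]
  have hlog : Real.log (8.5 / 107.5) = -Real.log (107.5 / 8.5) := by
    rw [← Real.log_inv]
    norm_num
  have hnn1 : 0 ≤ Real.log (((n : ℝ) + 11.5) / ((n : ℝ) - 0.5)) := by
    apply Real.log_nonneg
    rw [le_div_iff₀ (by linarith)]
    linarith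
  have hnn2 : (0:ℝ) ≤ 1 / ((n : ℝ) - 0.5) := by
    have : (0:ℝ) < (n : ℝ) - 0.5 := by linarith
    positivity
  have hs := sum_bound n hn
  rw [hlog] at *
  nlinarith [hs, hnn1, hnn2]
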